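/- Let ξ ∈ F^× be a unit with 0 < |σ(ξ)| ≤ |ξ|, let c₁, c₂ > 0, and define c′ = max{c₁|σ(ξ)|/|ξ| + c₂|ξ|/|σ(ξ)|, c₂|σ(ξ)|/|ξ| + c₁|ξ|/|σ(ξ)|}. Let α, w, c ∈ O_F be nonzero elements satisfying N(w) ≤ N(α), |σ(ξ)| ≤ |σ(w)|/|w| ≤ |ξ|, |σ(ξ)| ≤ |σ(α)|/|α| ≤ |ξ|, |c| ≤ c₁|α| and |σ(c)| ≤ c₂|σ(α)|. Then |c·σ(w)| + |w·σ(c)| ≤ c′·N(α)^(1/2). -/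

import Mathlib

open IntermediateField NumberField

noncomputable section

/-- `β = i·√(D + B√D)` (positive real square roots). -/
def qβ (B D : ℕ) : ℂ :=
  Complex.I * ((Real.sqrt ((D : ℝ) + (B : ℝ) * Real.sqrt (D : ℝ)) : ℝ) : ℂ)

/-- `β₃ = i·√(D − B√D)`. -/
def qβ₃ (B D : ℕ) : ℂ :=
  Complex.I * ((Real.sqrt ((D : ℝ) - (B : ℝ) * Real.sqrt (D : ℝ)) : ℝ) : ℂ)

/-- The imaginary cyclic quartic field `F = ℚ(β) = ℚ(√(−(D + B√D))) ⊆ ℂ`. -/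
def qF (B D : ℕ) : IntermediateField ℚ ℂ := ℚ⟮qβ B D⟯

/-- The complex absolute value of an element of `F`, via the inclusion `F ⊆ ℂ`. -/
def qAbs {B D : ℕ} (x : qF B D) : ℝ := ‖(x : ℂ)‖

/-- `N(x) = |x|²·|σ(x)|²`, the absolute value of the field norm of `x ∈ F`. -/
def qNorm {B D : ℕ} (σ : qF B D ≃ₐ[ℚ] qF B D) (x : qF B D) : ℝ :=
  qAbs x ^ 2 * qAbs (σ x) ^ 2

private lemma st15_core (u p q c₁ c₂ : ℝ) (hu : 1 ≤ u) (hp : 0 < p) (hq : 0 < q)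
    (hc₂ : 0 < c₂) (hc : c₂ ≤ c₁) (hpq : p * q ≤ 1)
    (h1 : p ≤ u * q) (h2 : q ≤ u * p) :
    c₁ * p + c₂ * q ≤ c₁ * u + c₂ / u := by
  have hu0 : (0 : ℝ) < u := lt_of_lt_of_le one_pos hu
  have hc₁ : (0 : ℝ) < c₁ := lt_of_lt_of_le hc₂ hc
  have hp2 : p ^ 2 ≤ u := by nlinarith
  have hq2 : q ^ 2 ≤ u := by nlinarith
  have hpu : p ≤ u := by nlinarith
  have hgoal : (c₁ * p + c₂ * q) * u ≤ (c₁ * u + c₂ / u) * u := by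
    have hrhs : (c₁ * u + c₂ / u) * u = c₁ * u * u + c₂ := by
      field_simp
    rw [hrhs]
    rcases le_or_gt (q * u) 1 with h | h
    · nlinarith [mul_nonneg (mul_nonneg hc₁.le hu0.le) (sub_nonneg.2 hpu)]
    · have key : u * (p + q) ≤ u ^ 2 + 1 := by
        nlinarith [sq_nonneg (p - q), sq_nonneg (p * q - 1),
          mul_nonneg (sub_nonneg.2 hp2) (sub_nonneg.2 hq2),
          mul_nonneg (sub_nonneg.2 hpq) hu0.le,
          mul_nonneg (sub_nonneg.2 hp2) hq.le,
          mul_nonneg (sub_nonneg.2 hq2) hp.le, sq_nonneg (u - p * q * u)]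
      nlinarith [mul_le_mul_of_nonneg_left key hc₁.le]
  exact le_of_mul_le_mul_right hgoal hu0

private lemma qAbs_pos {B D : ℕ} {x : qF B D} (hx : x ≠ 0) : 0 < qAbs x := by
  have : (x : ℂ) ≠ 0 := by
    simpa using hx
  exact norm_pos_iff.mpr this

set_option maxHeartbeats 1000000 in
/-- Let `ξ` be a unit with `0 < |σ(ξ)| ≤ |ξ|`, let `c₁, c₂ > 0`, and
`c′ = max{c₁|σ(ξ)|/|ξ| + c₂|ξ|/|σ(ξ)|, c₂|σ(ξ)|/|ξ| + c₁|ξ|/|σ(ξ)|}`. If the nonzero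
`α, w, c ∈ O_F` satisfy `N(w) ≤ N(α)`, `|σ(ξ)| ≤ |σ(w)|/|w| ≤ |ξ|`,
`|σ(ξ)| ≤ |σ(α)|/|α| ≤ |ξ|`, `|c| ≤ c₁|α|` and `|σ(c)| ≤ c₂|σ(α)|`, then
`|c·σ(w)| + |w·σ(c)| ≤ c′·N(α)^(1/2)`. -/
theorem statement15 (B C D : ℕ) (hB : 0 < B) (hC : 0 < C) (hD : D = B ^ 2 + C ^ 2)
    (hsf : Squarefree D)
    (σ : qF B D ≃ₐ[ℚ] qF B D)
    (hσ : ((σ ⟨qβ B D, mem_adjoin_simple_self ℚ (qβ B D)⟩ : qF B D) : ℂ) = -(qβ₃ B D))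
    (ξ : (𝓞 (qF B D))ˣ)
    (hσξpos : 0 < qAbs (σ ((ξ : 𝓞 (qF B D)) : qF B D)))
    (hσξle : qAbs (σ ((ξ : 𝓞 (qF B D)) : qF B D)) ≤ qAbs ((ξ : 𝓞 (qF B D)) : qF B D))
    (c₁ c₂ : ℝ) (hc₁ : 0 < c₁) (hc₂ : 0 < c₂)
    (c' : ℝ)
    (hc' : c' = max
      (c₁ * qAbs (σ ((ξ : 𝓞 (qF B D)) : qF B D)) / qAbs ((ξ : 𝓞 (qF B D)) : qF B D) +
        c₂ * qAbs ((ξ : 𝓞 (qF B D)) : qF B D) / qAbs (σ ((ξ : 𝓞 (qF B D)) : qF B D)))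
      (c₂ * qAbs (σ ((ξ : 𝓞 (qF B D)) : qF B D)) / qAbs ((ξ : 𝓞 (qF B D)) : qF B D) +
        c₁ * qAbs ((ξ : 𝓞 (qF B D)) : qF B D) / qAbs (σ ((ξ : 𝓞 (qF B D)) : qF B D))))
    (α w c : 𝓞 (qF B D)) (hα : α ≠ 0) (hw : w ≠ 0) (hcne : c ≠ 0)
    (hNw : qNorm σ ((w : 𝓞 (qF B D)) : qF B D) ≤ qNorm σ ((α : 𝓞 (qF B D)) : qF B D))
    (hw1 : qAbs (σ ((ξ : 𝓞 (qF B D)) : qF B D)) ≤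
      qAbs (σ ((w : 𝓞 (qF B D)) : qF B D)) / qAbs ((w : 𝓞 (qF B D)) : qF B D))
    (hw2 : qAbs (σ ((w : 𝓞 (qF B D)) : qF B D)) / qAbs ((w : 𝓞 (qF B D)) : qF B D) ≤
      qAbs ((ξ : 𝓞 (qF B D)) : qF B D))
    (hα1 : qAbs (σ ((ξ : 𝓞 (qF B D)) : qF B D)) ≤
      qAbs (σ ((α : 𝓞 (qF B D)) : qF B D)) / qAbs ((α : 𝓞 (qF B D)) : qF B D))
    (hα2 : qAbs (σ ((α : 𝓞 (qF B D)) : qF B D)) / qAbs ((α : 𝓞 (qF B D)) : qF B D) ≤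
      qAbs ((ξ : 𝓞 (qF B D)) : qF B D))
    (hcb : qAbs ((c : 𝓞 (qF B D)) : qF B D) ≤ c₁ * qAbs ((α : 𝓞 (qF B D)) : qF B D))
    (hσcb : qAbs (σ ((c : 𝓞 (qF B D)) : qF B D)) ≤
      c₂ * qAbs (σ ((α : 𝓞 (qF B D)) : qF B D))) :
    ‖((((c : 𝓞 (qF B D)) : qF B D) : ℂ) *
        ((σ ((w : 𝓞 (qF B D)) : qF B D) : qF B D) : ℂ))‖ +
      ‖((((w : 𝓞 (qF B D)) : qF B D) : ℂ) *
        ((σ ((c : 𝓞 (qF B D)) : qF B D) : qF B D) : ℂ))‖ ≤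
      c' * qNorm σ ((α : 𝓞 (qF B D)) : qF B D) ^ ((1 : ℝ) / 2) := by

  classical
  -- nonzero elements of F and positivity of absolute values
  have hαF : ((α : 𝓞 (qF B D)) : qF B D) ≠ 0 := RingOfIntegers.coe_ne_zero_iff.mpr hα
  have hwF : ((w : 𝓞 (qF B D)) : qF B D) ≠ 0 := RingOfIntegers.coe_ne_zero_iff.mpr hw
  have hcF : ((c : 𝓞 (qF B D)) : qF B D) ≠ 0 := RingOfIntegers.coe_ne_zero_iff.mpr hcne
  have hσαF : σ ((α : 𝓞 (qF B D)) : qF B D) ≠ 0 :=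
    fun h => hαF (σ.injective (h.trans (map_zero σ).symm))
  have hσwF : σ ((w : 𝓞 (qF B D)) : qF B D) ≠ 0 :=
    fun h => hwF (σ.injective (h.trans (map_zero σ).symm))
  set A := qAbs ((α : 𝓞 (qF B D)) : qF B D) with hAdef
  set A' := qAbs (σ ((α : 𝓞 (qF B D)) : qF B D)) with hA'def
  set W := qAbs ((w : 𝓞 (qF B D)) : qF B D) with hWdef
  set W' := qAbs (σ ((w : 𝓞 (qF B D)) : qF B D)) with hW'def
  set X := qAbs ((ξ : 𝓞 (qF B D)) : qF B D) with hXdef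
  set X' := qAbs (σ ((ξ : 𝓞 (qF B D)) : qF B D)) with hX'def
  set Cc := qAbs ((c : 𝓞 (qF B D)) : qF B D) with hCcdef
  set Cc' := qAbs (σ ((c : 𝓞 (qF B D)) : qF B D)) with hCc'def
  have hA : 0 < A := qAbs_pos hαF
  have hA' : 0 < A' := qAbs_pos hσαF
  have hW : 0 < W := qAbs_pos hwF
  have hW' : 0 < W' := qAbs_pos hσwF
  have hX' : 0 < X' := hσξpos
  have hX : 0 < X := lt_of_lt_of_le hX' hσξle
  -- cross-multiplied hypotheses
  have hw1' : X' * W ≤ W' := (le_div_iff₀ hW).mp hw1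
  have hw2' : W' ≤ X * W := (div_le_iff₀ hW).mp hw2
  have hα1' : X' * A ≤ A' := (le_div_iff₀ hA).mp hα1
  have hα2' : A' ≤ X * A := (div_le_iff₀ hA).mp hα2
  have hNw' : W ^ 2 * W' ^ 2 ≤ A ^ 2 * A' ^ 2 := hNw
  have hWW : W * W' ≤ A * A' := by nlinarith [mul_pos hW hW', mul_pos hA hA']
  -- the normalized quantities
  set u := X / X' with hudef
  set p := W' / A' with hpdef
  set q := W / A with hqdef
  have hu : 1 ≤ u := (one_le_div hX').mpr hσξle
  have hp : 0 < p := div_pos hW' hA'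
  have hq : 0 < q := div_pos hW hA
  have hpq : p * q ≤ 1 := by
    rw [hpdef, hqdef, div_mul_div_comm, div_le_one (mul_pos hA' hA)]
    nlinarith
  have h1 : p ≤ u * q := by
    rw [hpdef, hqdef, hudef, div_mul_div_comm, div_le_div_iff₀ hA' (mul_pos hX' hA)]
    nlinarith [mul_le_mul_of_nonneg_right hw2' (mul_pos hX' hA).le,
      mul_le_mul_of_nonneg_left hα1' (mul_pos hX hW).le]
  have h2 : q ≤ u * p := by
    rw [hpdef, hqdef, hudef, div_mul_div_comm, div_le_div_iff₀ hA (mul_pos hX' hA')]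
    nlinarith [mul_le_mul_of_nonneg_left hα2' (mul_pos hX' hW).le,
      mul_le_mul_of_nonneg_right hw1' (mul_pos hX hA').le]
  -- the main normalized bound
  have hst : c₁ * p + c₂ * q ≤ c' := by
    rcases le_total c₂ c₁ with hcc | hcc
    · have h := st15_core u p q c₁ c₂ hu hp hq hc₂ hcc hpq h1 h2
      have he : c₁ * u + c₂ / u = c₂ * X' / X + c₁ * X / X' := by
        rw [hudef]; field_simp; ring
      rw [hc']
      exact le_trans h (he ▸ le_max_right _ _)
    · have h := st15_core u q p c₂ c₁ hu hq hp hc₁ hcc (by rw [mul_comm]; exact hpq) h2 h1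
      have he : c₂ * u + c₁ / u = c₁ * X' / X + c₂ * X / X' := by
        rw [hudef]; field_simp; ring
      rw [hc']
      have hle : c₁ * p + c₂ * q ≤ c₁ * X' / X + c₂ * X / X' := by
        rw [← he]; linarith
      exact le_trans hle (le_max_left _ _)
  -- put the pieces together
  have hmain : c₁ * A * W' + c₂ * A' * W ≤ c' * (A * A') := by
    have h := mul_le_mul_of_nonneg_right hst (mul_pos hA hA').le
    have he : (c₁ * p + c₂ * q) * (A * A') = c₁ * A * W' + c₂ * A' * W := by
      rw [hpdef, hqdef]; field_simp
    linarith [he ▸ h]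
  have hcb' : Cc ≤ c₁ * A := hcb
  have hσcb' : Cc' ≤ c₂ * A' := hσcb
  have hLHS : Cc * W' + W * Cc' ≤ c₁ * A * W' + c₂ * A' * W := by
    nlinarith [mul_le_mul_of_nonneg_right hcb' hW'.le,
      mul_le_mul_of_nonneg_left hσcb' hW.le]
  have hAA' : qNorm σ ((α : 𝓞 (qF B D)) : qF B D) ^ ((1 : ℝ) / 2) = A * A' := by
    have h1 : qNorm σ ((α : 𝓞 (qF B D)) : qF B D) = (A * A') ^ 2 := by
      simp only [qNorm, ← hAdef, ← hA'def]; ring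
    rw [h1, ← Real.rpow_natCast (A * A') 2, ← Real.rpow_mul (mul_pos hA hA').le]
    norm_num
  rw [norm_mul, norm_mul, hAA']
  exact le_trans hLHS hmain
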